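/- Let m ≥ 1 be a natural number, let 0 ≤ μ₀ < μ₁ ≤ 1 with δ = μ₁ − μ₀, let f > 0 and B > 0, and let n be a real number with |n| ≤ B·(1+f)/f. If k ≥ 2·B·(1+f)/(f·m·δ), then both truthful-reporting inequalities hold: n·μ₀·(m−1)/m + (1−μ₀)·k·(μ₀+μ₁)/2 ≥ n·(μ₀·(m−1)/m + 1/m) + μ₀·k·(1−(μ₀+μ₁)/2), and n·(μ₁·(m−1)/m + 1/m) + μ₁·k·(1−(μ₀+μ₁)/2) ≥ n·μ₁·(m−1)/m + (1−μ₁)·k·(μ₀+μ₁)/2. (Theorem 1, multiple-entry case: with the security position bounded by B(1+f)/f, scaling k ≥ 2B(1+f)/(fmδ) makes truthful reporting a best response for every arbiter.) -/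

import Mathlib

/-- Theorem 1, multiple-entry case: with the security position bounded by
`B(1+f)/f`, scaling `k ≥ 2B(1+f)/(fmδ)` makes truthful reporting a best
response for every arbiter. -/
theorem stmt_10 (m : ℕ) (hm : 1 ≤ m) (μ₀ μ₁ : ℝ) (hμ₀ : 0 ≤ μ₀) (hμ : μ₀ < μ₁)
    (hμ₁ : μ₁ ≤ 1) (δ : ℝ) (hδ : δ = μ₁ - μ₀) (f B : ℝ) (hf : 0 < f)
    (hB : 0 < B) (n : ℝ) (hn : |n| ≤ B * (1 + f) / f)
    (k : ℝ) (hk : k ≥ 2 * B * (1 + f) / (f * m * δ)) :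
    n * μ₀ * (m - 1) / m + (1 - μ₀) * k * ((μ₀ + μ₁) / 2) ≥
      n * (μ₀ * (m - 1) / m + 1 / m) + μ₀ * k * (1 - (μ₀ + μ₁) / 2) ∧
    n * (μ₁ * (m - 1) / m + 1 / m) + μ₁ * k * (1 - (μ₀ + μ₁) / 2) ≥
      n * μ₁ * (m - 1) / m + (1 - μ₁) * k * ((μ₀ + μ₁) / 2) := by
  have hm' : (1:ℝ) ≤ (m:ℝ) := by exact_mod_cast hm
  have hm0 : (0:ℝ) < (m:ℝ) := by linarith
  have hmne : (m:ℝ) ≠ 0 := ne_of_gt hm0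
  have hδ' : 0 < δ := by rw [hδ]; linarith
  have hC : 0 < B * (1 + f) / f := by positivity
  have hn1 : n ≤ B * (1 + f) / f := (abs_le.mp hn).2
  have hn2 : -(B * (1 + f) / f) ≤ n := (abs_le.mp hn).1
  -- key: k * δ * m ≥ 2 * (B*(1+f)/f)
  have heq : 2 * B * (1 + f) / (f * (m:ℝ) * δ) * ((m:ℝ) * δ) = 2 * (B * (1 + f) / f) := by
    field_simp
  have hkey : k * δ * (m:ℝ) ≥ 2 * (B * (1 + f) / f) := by
    have h := mul_le_mul_of_nonneg_right hk (by positivity : (0:ℝ) ≤ (m:ℝ) * δ)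
    rw [heq] at h
    nlinarith
  constructor
  · rw [ge_iff_le, ← sub_nonneg]
    have : n * μ₀ * ((m:ℝ) - 1) / m + (1 - μ₀) * k * ((μ₀ + μ₁) / 2) -
        (n * (μ₀ * ((m:ℝ) - 1) / m + 1 / m) + μ₀ * k * (1 - (μ₀ + μ₁) / 2)) =
        (k * δ * (m:ℝ) - 2 * n) / (2 * m) := by
      rw [hδ]; field_simp; ring
    rw [this]
    apply div_nonneg _ (by positivity)
    linarith
  · rw [ge_iff_le, ← sub_nonneg]
    have : n * (μ₁ * ((m:ℝ) - 1) / m + 1 / m) + μ₁ * k * (1 - (μ₀ + μ₁) / 2) -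
        (n * μ₁ * ((m:ℝ) - 1) / m + (1 - μ₁) * k * ((μ₀ + μ₁) / 2)) =
        (k * δ * (m:ℝ) + 2 * n) / (2 * m) := by
      rw [hδ]; field_simp; ring
    rw [this]
    apply div_nonneg _ (by positivity)
    linarith
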